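/- Let L be a Lie algebra over a field of characteristic ≠ 2 satisfying [x,y,[u,v],z]=0, and let m be even with m ≥ 4. Then for left-normalized brackets of total length m and indices i,j > 2, the identity [x_1,x_i,...,x_2,x_j] + [x_1,x_j,...,x_2,x_i] = [x_1,x_2,...,x_i,x_j] + [x_2,x_i,...,x_j,x_1] + [x_1,x_j,...,x_i,x_2] holds, where '...' stands for the same fixed sequence of intermediate variables in each bracket. -/

import Mathlib

/-- Left-normalized Lie bracket: `lnb x [a₁,…,aₙ] = [[…[x,a₁],…],aₙ]`. -/
def lnb {L : Type*} [LieRing L] (x : L) (l : List L) : L :=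
  l.foldl (fun a b => ⁅a, b⁆) x

section Aux

variable {L : Type*} [LieRing L]

/-- `z` is central. -/
def Cz (z : L) : Prop := ∀ t : L, ⁅z, t⁆ = 0

/-- `x` is a bracket. -/
def Br (x : L) : Prop := ∃ p q : L, x = ⁅p, q⁆

lemma br_lie (p q : L) : Br (⁅p, q⁆ : L) := ⟨p, q, rfl⟩

lemma cz_lie_right {z : L} (hz : Cz z) (t : L) : ⁅t, z⁆ = 0 := by
  rw [← lie_skew, hz, neg_zero]

lemma lnb_cons (x a : L) (s : List L) : lnb x (a :: s) = lnb ⁅x, a⁆ s := rfl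

lemma lnb_nil (x : L) : lnb x [] = x := rfl

lemma lnb_append (x : L) (s t : List L) : lnb x (s ++ t) = lnb (lnb x s) t :=
  List.foldl_append

lemma lnb_concat2 (x : L) (s : List L) (c d : L) :
    lnb x (s ++ [c, d]) = ⁅⁅lnb x s, c⁆, d⁆ := by
  rw [lnb_append]; rfl

lemma lnb_concat1 (x : L) (s : List L) (c : L) :
    lnb x (s ++ [c]) = ⁅lnb x s, c⁆ := by
  rw [lnb_append]; rfl

lemma lnb_add (s : List L) : ∀ x y : L, lnb (x + y) s = lnb x s + lnb y s := by
  induction s with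
  | nil => intro x y; rfl
  | cons a s ih => intro x y; rw [lnb_cons, add_lie, ih]; rfl

lemma lnb_zero (s : List L) : lnb (0 : L) s = 0 := by
  induction s with
  | nil => rfl
  | cons a s ih => rw [lnb_cons, zero_lie, ih]

lemma br_lnb {x : L} (h : Br x) (s : List L) : Br (lnb x s) := by
  induction s generalizing x with
  | nil => exact h
  | cons a s ih => exact ih (br_lie _ _)

lemma jac (a b c : L) : ⁅⁅a, b⁆, c⁆ = ⁅⁅a, c⁆, b⁆ + ⁅a, ⁅b, c⁆⁆ := by
  rw [← lie_skew ⁅a, c⁆ b, leibniz_lie a b c]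
  abel

variable (hcm : ∀ x y u v z : L, ⁅⁅⁅x, y⁆, ⁅u, v⁆⁆, z⁆ = 0)
include hcm

lemma cz_hcm {A B : L} (hA : Br A) (hB : Br B) : Cz (⁅A, B⁆ : L) := by
  obtain ⟨p, q, rfl⟩ := hA
  obtain ⟨u, v, rfl⟩ := hB
  intro t
  exact hcm p q u v t

omit hcm in
lemma absorb1 {z : L} (hz : Cz z) (s : List L) (hs : s ≠ []) (x : L) :
    lnb (x + z) s = lnb x s := by
  cases s with
  | nil => exact absurd rfl hs
  | cons a s => rw [lnb_cons, add_lie, hz, add_zero]; rfl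

omit hcm in
lemma absorbA {z : L} (hz : Cz z) (A : L) (s : List L) (x : L) :
    ⁅A, lnb (x + z) s⁆ = ⁅A, lnb x s⁆ := by
  cases s with
  | nil => rw [lnb_nil, lnb_nil, lie_add, cz_lie_right hz, add_zero]
  | cons a s => rw [absorb1 hz _ (List.cons_ne_nil a s)]

lemma Lmove (c d : L) :
    ∀ (s : List L) (P : L), Br P → lnb P (s ++ [c, d]) = lnb ⁅P, c⁆ (s ++ [d]) := by
  intro s
  induction s with
  | nil => intro P _; rfl
  | cons y s ih =>
    intro P hP
    rw [List.cons_append, List.cons_append, lnb_cons, lnb_cons,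
      ih ⁅P, y⁆ (br_lie P y), jac P y c]
    have hz : Cz (⁅P, ⁅y, c⁆⁆ : L) := by
      obtain ⟨p, q, rfl⟩ := hP
      intro t; exact hcm p q y c t
    rw [absorb1 hz (s ++ [d]) (by simp) ⁅⁅P, c⁆, y⁆]

lemma Swalk (a w : L) :
    ∀ (s : List L) (D : L), Br D → lnb ⁅a, D⁆ (s ++ [w]) = ⁅⁅a, lnb D s⁆, w⁆ := by
  intro s
  induction s with
  | nil => intro D _; rfl
  | cons y s ih =>
    intro D hD
    rw [List.cons_append, lnb_cons, jac a D y]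
    have hz : Cz (⁅⁅a, y⁆, D⁆ : L) := cz_hcm hcm (br_lie a y) hD
    rw [add_comm, absorb1 hz (s ++ [w]) (by simp) ⁅a, ⁅D, y⁆⁆,
      ih ⁅D, y⁆ (br_lie D y)]
    rfl

lemma Kswap {A B : L} (hA : Br A) (hB : Br B) (t : L) :
    ⁅⁅A, t⁆, B⁆ = -⁅A, ⁅B, t⁆⁆ := by
  have h := jac A t B
  rw [(cz_hcm hcm hA hB) t] at h
  rw [h, zero_add, ← lie_skew t B, lie_neg]

lemma shuttle : ∀ (s : List L) (A B : L), Br A → Br B →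
    ⁅lnb A s, B⁆ = ((-1 : ℤ) ^ s.length) • ⁅A, lnb B s.reverse⁆ := by
  intro s
  induction s with
  | nil => intro A B _ _; simp [lnb_nil]
  | cons t s ih =>
    intro A B hA hB
    rw [lnb_cons, ih ⁅A, t⁆ B (br_lie A t) hB]
    have hK : ⁅⁅A, t⁆, lnb B s.reverse⁆ = -⁅A, ⁅lnb B s.reverse, t⁆⁆ :=
      Kswap hcm hA (br_lnb hB s.reverse) t
    rw [hK, List.reverse_cons, lnb_concat1, List.length_cons, pow_succ,
      mul_smul, neg_one_smul]

lemma perm_inside {A : L} (hA : Br A) :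
    ∀ {s s' : List L}, s.Perm s' → ∀ B : L, Br B →
      ⁅A, lnb B s⁆ = ⁅A, lnb B s'⁆ := by
  intro s s' h
  induction h with
  | nil => intro B _; rfl
  | cons x _ ih =>
    intro B hB
    rw [lnb_cons, lnb_cons]
    exact ih ⁅B, x⁆ (br_lie B x)
  | swap x y t =>
    intro B hB
    rw [lnb_cons, lnb_cons, lnb_cons, lnb_cons]
    have hj := jac B y x
    have hz : Cz (⁅B, ⁅y, x⁆⁆ : L) := cz_hcm hcm hB (br_lie y x)
    rw [hj]
    exact absorbA hz A t _
  | trans _ _ ih1 ih2 =>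
    intro B hB
    exact (ih1 B hB).trans (ih2 B hB)

lemma deltagamma {s : List L} (hev : Even s.length) (a b c d : L) :
    ⁅lnb ⁅a, b⁆ s, ⁅c, d⁆⁆ = ⁅⁅a, b⁆, lnb ⁅c, d⁆ s⁆ := by
  rw [shuttle hcm s ⁅a, b⁆ ⁅c, d⁆ (br_lie a b) (br_lie c d),
    Even.neg_one_pow hev, one_smul]
  exact perm_inside hcm (br_lie a b) (List.reverse_perm s) ⁅c, d⁆ (br_lie c d)

lemma lemR2 {l : List L} (hev : Even l.length) (a b c d : L) :
    lnb ⁅a, b⁆ (l ++ [c, d]) =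
      lnb ⁅a, b⁆ (l ++ [d, c]) + ⁅⁅a, b⁆, lnb ⁅c, d⁆ l⁆ := by
  rw [lnb_concat2, lnb_concat2, jac (lnb ⁅a, b⁆ l) c d,
    deltagamma hcm hev a b c d]

lemma lemR3 (l : List L) (a b c d : L) :
    lnb ⁅a, b⁆ (l ++ [c, d]) =
      lnb ⁅a, c⁆ (l ++ [b, d]) + ⁅⁅a, d⁆, lnb ⁅b, c⁆ l⁆
        - lnb ⁅b, c⁆ (l ++ [d, a]) := by
  rw [Lmove hcm c d l ⁅a, b⁆ (br_lie a b), Lmove hcm b d l ⁅a, c⁆ (br_lie a c),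
    jac a b c, lnb_add, Swalk hcm a d l ⁅b, c⁆ (br_lie b c),
    jac a (lnb ⁅b, c⁆ l) d, lnb_concat2, ← lie_skew a ⁅lnb ⁅b, c⁆ l, d⁆]
  abel

end Aux

/-- In a Lie algebra over a field of characteristic ≠ 2 satisfying
`[x,y,[u,v],z] = 0`, for an even `m ≥ 4` and left-normalized brackets of total
length `m` (so the common intermediate list `l` has `m - 4` entries) one has
`[x₁,xᵢ,…,x₂,xⱼ] + [x₁,xⱼ,…,x₂,xᵢ]
  = [x₁,x₂,…,xᵢ,xⱼ] + [x₂,xᵢ,…,xⱼ,x₁] + [x₁,xⱼ,…,xᵢ,x₂]`. -/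
theorem stmt19 (F : Type) [Field F] (hF : ringChar F ≠ 2)
    (L : Type) [LieRing L] [LieAlgebra F L]
    (hcm : ∀ x y u v z : L, ⁅⁅⁅x, y⁆, ⁅u, v⁆⁆, z⁆ = 0)
    (m : ℕ) (hm : Even m) (hm4 : 4 ≤ m)
    (l : List L) (hl : l.length = m - 4) (x1 x2 xi xj : L) :
    lnb x1 (xi :: l ++ [x2, xj]) + lnb x1 (xj :: l ++ [x2, xi]) =
      lnb x1 (x2 :: l ++ [xi, xj]) + lnb x2 (xi :: l ++ [xj, x1]) +
        lnb x1 (xj :: l ++ [xi, x2]) := by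
  have hev : Even l.length := by
    obtain ⟨r, hr⟩ := hm
    exact ⟨r - 2, by omega⟩
  have hgoal :
      lnb ⁅x1, xi⁆ (l ++ [x2, xj]) + lnb ⁅x1, xj⁆ (l ++ [x2, xi]) =
        lnb ⁅x1, x2⁆ (l ++ [xi, xj]) + lnb ⁅x2, xi⁆ (l ++ [xj, x1]) +
          lnb ⁅x1, xj⁆ (l ++ [xi, x2]) := by
    rw [lemR3 hcm l x1 x2 xi xj, lemR2 hcm hev x1 xj x2 xi]
    abel
  exact hgoal
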